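/- Let a and b be integers with a ≡ 0 (mod 3) and b ≡ 1 (mod 3), and let M̄ be the reduction of M₂(a,b) modulo 3, a 6×6 matrix over ℤ/3ℤ. Then a vector v ∈ (ℤ/3ℤ)⁶ satisfies M̄ · v = 0 if and only if v = 0, v = β, or v = −β, where β = (1, 0, 1, −1, 1, 1). In particular, the mod 3 kernel of M₂(a,b) is one-dimensional, spanned by β. -/
import Mathlib


open Matrix

def M2 (a b : ℤ) : Matrix (Fin 6) (Fin 6) ℤ :=
  !![-2*a,    1,    0,    0,    0,    0;
        1,    2,   -1,    0,    0,    0;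
        0,   -1, -2*b,    1,    0,    0;
        0,    0,    1,  2*a,   -1,    0;
        0,    0,    0,   -1,   -2,    1;
        0,    0,    0,    0,    1,  2*b]

private lemma cv5 {α : Type*} (x : α) (u : Fin 5 → α) : Matrix.vecCons x u 5 = u 4 := rfl

set_option maxRecDepth 100000 in
set_option maxHeartbeats 2000000 in
theorem mod3_kernel_M2_case1 (a b : ℤ) (ha : a % 3 = 0) (hb : b % 3 = 1)
    (v : Fin 6 → ZMod 3) :
    ((M2 a b).map (Int.cast : ℤ → ZMod 3)).mulVec v = 0 ↔
      v = 0 ∨ v = ![1, 0, 1, -1, 1, 1] ∨ v = -![1, 0, 1, -1, 1, 1] := by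
  have ha' : (a : ZMod 3) = 0 := by
    have : (3 : ℤ) ∣ a := Int.dvd_of_emod_eq_zero ha
    exact_mod_cast (ZMod.intCast_zmod_eq_zero_iff_dvd a 3).2 this
  have hb' : (b : ZMod 3) = 1 := by
    have h1 : ((b - 1 : ℤ) : ZMod 3) = 0 := by
      exact (ZMod.intCast_zmod_eq_zero_iff_dvd _ 3).2 (by omega)
    push_cast at h1
    linear_combination h1
  have hM : (M2 a b).map (Int.cast : ℤ → ZMod 3) =
      !![0,1,0,0,0,0;1,2,-1,0,0,0;0,-1,-2,1,0,0;0,0,1,0,-1,0;0,0,0,-1,-2,1;0,0,0,0,1,2] := by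
    unfold M2
    ext i j
    fin_cases i <;> fin_cases j <;>
      simp [cv5, ha', hb', Matrix.vecHead, Matrix.vecTail]
  rw [hM]
  revert v
  decide
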